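/- Let γ : [0,1] → ℝ^n be a Lipschitz path and A ⊂ [0,1] Lebesgue measurable with H^1(γ(A)) = 0. Then γ'(t) = 0 for Lebesgue-almost all t ∈ A. -/

import Mathlib

open MeasureTheory Set Filter Topology
open scoped ENNReal NNReal

noncomputable section

/-- Euclidean space `ℝ^n`. -/
abbrev Euc (n : ℕ) : Type := EuclideanSpace ℝ (Fin n)

/-- The hypercube `[-1,1]^n`. -/
def cube (n : ℕ) : Set (Euc n) := {x | ∀ i, |x i| ≤ 1}

/-- If `γ` expands distances on `S` by at least `1/C`, then `μH¹ S ≤ C * μH¹ (γ '' S)`. -/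
lemma hausdorff_le_of_antilip {n : ℕ} (γ : ℝ → Euc n) (C : ℝ≥0) (S : Set ℝ)
    (h : ∀ x ∈ S, ∀ y ∈ S, dist x y ≤ (C : ℝ) * dist (γ x) (γ y)) :
    μH[1] S ≤ (C : ℝ≥0∞) * μH[1] (γ '' S) := by
  have hg : AntilipschitzWith C (fun x : S => γ (x : ℝ)) := by
    intro x y
    rw [edist_dist, edist_dist, Subtype.dist_eq,
      ← ENNReal.ofReal_coe_nnreal, ← ENNReal.ofReal_mul C.coe_nonneg]
    exact ENNReal.ofReal_le_ofReal (h x x.2 y y.2)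
  have h1 : μH[1] S = μH[1] (univ : Set S) := by
    conv_lhs => rw [← Subtype.range_coe (s := S), ← image_univ]
    exact isometry_subtype_coe.hausdorffMeasure_image (Or.inl one_pos.le) _
  have h2 := hg.le_hausdorffMeasure_image (d := 1) one_pos.le univ
  rw [image_univ, ENNReal.rpow_one] at h2
  have h3 : range (fun x : S => γ (x : ℝ)) = γ '' S := by
    ext z; simp
  rw [h3] at h2
  exact h1 ▸ h2

/-- If `H^1(γ(A)) = 0` for a Lipschitz path `γ` and measurable `A ⊆ [0,1]`,
then `γ' = 0` almost everywhere on `A`. -/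
theorem deriv_eq_zero_of_null_image {n : ℕ} (γ : ℝ → Euc n) (K : ℝ≥0)
    (hγ : LipschitzWith K γ) (A : Set ℝ) (hA : MeasurableSet A) (hA1 : A ⊆ Icc (0:ℝ) 1)
    (h0 : μH[1] (γ '' A) = 0) :
    ∀ᵐ t ∂(volume.restrict A), deriv γ t = 0 := by
  rw [ae_iff, Measure.restrict_apply' hA]
  -- the sets on which `γ` is approximately linear with big derivative, at scale `1/(k+1)`
  set E : ℕ → ℕ → Set ℝ := fun m k =>
    {t | t ∈ A ∧ DifferentiableAt ℝ γ t ∧ (1:ℝ)/(m+1) ≤ ‖deriv γ t‖ ∧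
      ∀ s : ℝ, |s - t| ≤ 1/(k+1) →
        ‖γ s - γ t - (s - t) • deriv γ t‖ ≤ 1/(2*(m+1)) * |s - t|} with hE
  set S : ℕ → ℕ → ℤ → Set ℝ := fun m k j =>
    E m k ∩ Icc ((j:ℝ)/(k+1)) ((j+1)/(k+1)) with hS
  have cover : {t | ¬ deriv γ t = 0} ∩ A ⊆
      {t | ¬ DifferentiableAt ℝ γ t} ∪ ⋃ (m : ℕ) (k : ℕ) (j : ℤ), S m k j := by
    rintro t ⟨ht0, htA⟩
    by_cases hd : DifferentiableAt ℝ γ t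
    · right
      have hpos : 0 < ‖deriv γ t‖ := norm_pos_iff.2 ht0
      obtain ⟨m, hm⟩ := exists_nat_one_div_lt hpos
      have hε : (0:ℝ) < 1/(2*((m:ℝ)+1)) := by positivity
      have hlo := (hasDerivAt_iff_isLittleO.1 hd.hasDerivAt).def hε
      obtain ⟨δ, hδpos, hδ⟩ := Metric.eventually_nhds_iff.1 hlo
      obtain ⟨k, hk⟩ := exists_nat_one_div_lt hδpos
      have htE : t ∈ E m k := by
        refine ⟨htA, hd, hm.le, fun s hs => ?_⟩
        have : dist s t < δ := lt_of_le_of_lt (by rwa [Real.dist_eq]) hk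
        simpa [Real.norm_eq_abs] using hδ this
      have hkpos : (0:ℝ) < (k:ℝ) + 1 := by positivity
      refine mem_iUnion.2 ⟨m, mem_iUnion.2 ⟨k, mem_iUnion.2 ⟨⌊t * ((k:ℝ)+1)⌋, htE, ?_, ?_⟩⟩⟩
      · rw [div_le_iff₀ hkpos]
        exact Int.floor_le _
      · rw [le_div_iff₀ hkpos]
        push_cast
        exact (Int.lt_floor_add_one _).le
    · exact Or.inl hd
  refine measure_mono_null cover (measure_union_null ?_ ?_)
  · have := hγ.ae_differentiableAt (μ := volume)
    rwa [ae_iff] at this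
  · refine measure_iUnion_null fun m => measure_iUnion_null fun k =>
      measure_iUnion_null fun j => ?_
    -- on each `S m k j`, `γ` is anti-Lipschitz with constant `2*(m+1)`
    have hM : (0:ℝ) < (m:ℝ) + 1 := by positivity
    have hanti : ∀ x ∈ S m k j, ∀ y ∈ S m k j,
        dist x y ≤ ((2*(m+1) : ℝ≥0) : ℝ) * dist (γ x) (γ y) := by
      rintro x ⟨hxE, hxI⟩ y ⟨hyE, hyI⟩
      have hxy : |y - x| ≤ 1/((k:ℝ)+1) := by
        have : ((j:ℝ)+1)/((k:ℝ)+1) - (j:ℝ)/((k:ℝ)+1) = 1/((k:ℝ)+1) := by ring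
        rw [abs_sub_le_iff]
        constructor <;> [skip; skip] <;>
          · rw [← this]; rcases hxI with ⟨h1, h2⟩; rcases hyI with ⟨h3, h4⟩; linarith
      have happrox := hxE.2.2.2 y hxy
      have hder : (1:ℝ)/((m:ℝ)+1) ≤ ‖deriv γ x‖ := hxE.2.2.1
      have hsmul : ‖(y - x) • deriv γ x‖ = |y - x| * ‖deriv γ x‖ := by
        rw [norm_smul, Real.norm_eq_abs]
      have htri : ‖(y - x) • deriv γ x‖ - ‖γ y - γ x‖ ≤
          ‖γ y - γ x - (y - x) • deriv γ x‖ := by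
        have h' := norm_sub_norm_le ((y - x) • deriv γ x) (γ y - γ x)
        rw [norm_sub_rev ((y - x) • deriv γ x) (γ y - γ x)] at h'
        exact h'
      have hlb : |y - x| * (1/((m:ℝ)+1)) ≤ ‖(y - x) • deriv γ x‖ := by
        rw [hsmul]
        exact mul_le_mul_of_nonneg_left hder (abs_nonneg _)
      have heq : |y - x| * (1/((m:ℝ)+1)) - 1/(2*((m:ℝ)+1)) * |y - x| =
          |y - x| / (2*((m:ℝ)+1)) := by
        field_simp
        ring
      have hnorm : |y - x| / (2*((m:ℝ)+1)) ≤ ‖γ y - γ x‖ := by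
        linarith [htri, hlb, happrox]
      rw [Real.dist_eq, dist_eq_norm]
      have hc : (((2*(m+1) : ℝ≥0)) : ℝ) = 2*((m:ℝ)+1) := by push_cast; ring
      rw [hc, norm_sub_rev (γ x) (γ y), abs_sub_comm]
      rw [div_le_iff₀ (by positivity : (0:ℝ) < 2*((m:ℝ)+1))] at hnorm
      linarith [hnorm]
    have key := hausdorff_le_of_antilip γ (2*(m+1)) (S m k j) hanti
    have himg : μH[1] (γ '' S m k j) = 0 := by
      refine le_antisymm (le_trans (measure_mono (image_mono ?_)) h0.le) zero_le
      exact fun t ht => ht.1.1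
    rw [himg, mul_zero, nonpos_iff_eq_zero] at key
    rw [← MeasureTheory.hausdorffMeasure_real]
    exact key
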